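/- Let 𝔽_q be a finite field with q elements and Q ∈ GL_2(𝔽_q). Let ℓ be the least positive integer such that Q^ℓ is a scalar matrix (i.e., Q^ℓ = α·I for some α ∈ 𝔽_q^×). Then every point v ∈ ℙ^1(𝔽_q) with τ_Q(v) ≠ v lies in an ℓ-cycle of τ_Q: the least positive integer n with τ_Q^n(v) = v equals ℓ. -/

import Mathlib

noncomputable def tauQ {F : Type*} [Field F] {m : ℕ}
    (Q : Matrix.GeneralLinearGroup (Fin m) F) :
    Projectivization F (Fin m → F) → Projectivization F (Fin m → F) :=
  Projectivization.map (Matrix.mulVecLin (Q : Matrix (Fin m) (Fin m) F))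
    (by
      intro x y hxy
      have h := congrArg
        (Matrix.mulVec ((Q⁻¹ : Matrix.GeneralLinearGroup (Fin m) F) :
          Matrix (Fin m) (Fin m) F)) hxy
      have hQ : ((Q : Matrix (Fin m) (Fin m) F))⁻¹ * (Q : Matrix (Fin m) (Fin m) F) = 1 :=
        Matrix.nonsing_inv_mul _ ((Matrix.isUnit_iff_isUnit_det _).mp Q.isUnit)
      simpa [Matrix.mulVecLin_apply, Matrix.mulVec_mulVec, hQ] using h)

lemma GL_mulVec_ne_zero {F : Type*} [Field F] {m : ℕ}
    (A : Matrix.GeneralLinearGroup (Fin m) F) {x : Fin m → F} (hx : x ≠ 0) :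
    (A : Matrix (Fin m) (Fin m) F).mulVec x ≠ 0 := by
  intro h
  apply hx
  have h2 := congrArg (Matrix.mulVec ((A⁻¹ : Matrix.GeneralLinearGroup (Fin m) F) :
    Matrix (Fin m) (Fin m) F)) h
  have hA : ((A : Matrix (Fin m) (Fin m) F))⁻¹ * (A : Matrix (Fin m) (Fin m) F) = 1 :=
    Matrix.nonsing_inv_mul _ ((Matrix.isUnit_iff_isUnit_det _).mp A.isUnit)
  simpa [Matrix.mulVec_mulVec, hA] using h2

lemma pow_mulVec_ne_zero {F : Type*} [Field F] {m : ℕ}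
    (Q : Matrix.GeneralLinearGroup (Fin m) F) (n : ℕ) {x : Fin m → F} (hx : x ≠ 0) :
    ((Q : Matrix (Fin m) (Fin m) F) ^ n).mulVec x ≠ 0 := by
  have : ((Q : Matrix (Fin m) (Fin m) F) ^ n) = ((Q ^ n : Matrix.GeneralLinearGroup (Fin m) F) :
      Matrix (Fin m) (Fin m) F) := by
    simp [Units.val_pow_eq_pow_val]
  rw [this]
  exact GL_mulVec_ne_zero _ hx

lemma tauQ_mk {F : Type*} [Field F] {m : ℕ}
    (Q : Matrix.GeneralLinearGroup (Fin m) F) (w : Fin m → F) (hw : w ≠ 0) :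
    tauQ Q (Projectivization.mk F w hw) =
      Projectivization.mk F ((Q : Matrix (Fin m) (Fin m) F).mulVec w)
        (GL_mulVec_ne_zero Q hw) := by
  simp [tauQ, Projectivization.map_mk]
  rfl

lemma tauQ_iterate {F : Type*} [Field F] {m : ℕ}
    (Q : Matrix.GeneralLinearGroup (Fin m) F) (n : ℕ) (w : Fin m → F) (hw : w ≠ 0) :
    (tauQ Q)^[n] (Projectivization.mk F w hw) =
      Projectivization.mk F (((Q : Matrix (Fin m) (Fin m) F) ^ n).mulVec w)
        (pow_mulVec_ne_zero Q n hw) := by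
  induction n with
  | zero => simp
  | succ k ih =>
    rw [Function.iterate_succ_apply', ih, tauQ_mk]
    congr 1
    rw [Matrix.mulVec_mulVec, pow_succ']

/-- **Forsyth–Gurev–Shrima.** Let `𝔽_q` be a finite field with `q` elements and
`Q ∈ GL_2(𝔽_q)`. Let `ℓ` be the least positive integer such that `Q^ℓ` is a scalar matrix
(`Q^ℓ = α·I` for some `α ∈ 𝔽_q^×`). Then every point `v ∈ ℙ^1(𝔽_q)` with `τ_Q(v) ≠ v` lies in
an `ℓ`-cycle of `τ_Q`: the least positive integer `n` with `τ_Q^n(v) = v` equals `ℓ`. -/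
theorem tauQ_nonfixed_period_eq_scalar_order_GL2
    {F : Type*} [Field F] [Fintype F]
    (Q : Matrix.GeneralLinearGroup (Fin 2) F) (ℓ : ℕ)
    (hℓ : IsLeast {n : ℕ | 0 < n ∧ ∃ α : Fˣ,
      (Q : Matrix (Fin 2) (Fin 2) F) ^ n = (α : F) • (1 : Matrix (Fin 2) (Fin 2) F)} ℓ)
    (v : Projectivization F (Fin 2 → F)) (hv : tauQ Q v ≠ v) :
    IsLeast {n : ℕ | 0 < n ∧ (tauQ Q)^[n] v = v} ℓ := by
  obtain ⟨⟨hℓpos, α, hα⟩, hmin⟩ := hℓ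
  set M : Matrix (Fin 2) (Fin 2) F := (Q : Matrix (Fin 2) (Fin 2) F) with hM
  have hvrep : v = Projectivization.mk F v.rep v.rep_nonzero := (Projectivization.mk_rep v).symm
  constructor
  · refine ⟨hℓpos, ?_⟩
    conv_lhs => rw [hvrep]
    rw [tauQ_iterate]
    conv_rhs => rw [hvrep]
    rw [Projectivization.mk_eq_mk_iff]
    exact ⟨α, by rw [← hM, hα]; simp [Matrix.smul_mulVec, Units.smul_def]⟩
  · rintro n ⟨hn, hfix⟩
    rw [hvrep, tauQ_iterate, Projectivization.mk_eq_mk_iff] at hfix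
    obtain ⟨a, ha⟩ := hfix
    -- ha : a • v.rep = (M ^ n).mulVec v.rep
    have hne : ∀ c : F, c • v.rep ≠ M.mulVec v.rep := by
      intro c hc
      apply hv
      rw [hvrep, tauQ_mk, Projectivization.mk_eq_mk_iff']
      exact ⟨c, hc⟩
    have hli : LinearIndependent F ![M.mulVec v.rep, v.rep] := by
      rw [linearIndependent_fin2]
      exact ⟨by simpa using v.rep_nonzero, by simpa using hne⟩
    have hcard : Fintype.card (Fin 2) = Module.finrank F (Fin 2 → F) := by simp
    let B := basisOfLinearIndependentOfCardEqFinrank hli hcard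
    have hB : ⇑B = ![M.mulVec v.rep, v.rep] :=
      coe_basisOfLinearIndependentOfCardEqFinrank hli hcard
    have hMn : (M ^ n).mulVecLin = ((a : F) • (1 : Matrix (Fin 2) (Fin 2) F)).mulVecLin := by
      apply B.ext
      intro i
      fin_cases i
      · show (M ^ n).mulVecLin (B 0) = _
        rw [hB]
        simp only [Matrix.mulVecLin_apply, Matrix.cons_val_zero]
        rw [Matrix.mulVec_mulVec, ← pow_succ, pow_succ', ← Matrix.mulVec_mulVec]
        have ha' : (M ^ n).mulVec v.rep = (a : F) • v.rep := ha.symm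
        rw [ha']
        simp [Matrix.smul_mulVec, Matrix.mulVec_smul]
      · show (M ^ n).mulVecLin (B 1) = _
        rw [hB]
        simp only [Matrix.mulVecLin_apply, Matrix.cons_val_one, Matrix.head_cons, Matrix.cons_val_zero]
        have ha' : (M ^ n).mulVec v.rep = (a : F) • v.rep := ha.symm
        rw [ha']
        simp [Matrix.smul_mulVec]
    have hMn' : M ^ n = (a : F) • (1 : Matrix (Fin 2) (Fin 2) F) := by
      have hinj : Function.Injective
          (Matrix.mulVecLin : Matrix (Fin 2) (Fin 2) F → _) := by
        intro A B h
        have := Matrix.toLin'.injective (a₁ := A) (a₂ := B)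
        apply this
        simpa [Matrix.toLin'_apply'] using h
      exact hinj hMn
    exact hmin ⟨hn, a, hMn'⟩
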